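/- Let λ > 0, L : [0,T] → ℝ continuous with |L| ≤ M, and let H(t) = -Σ_{k=1}^∞ (L^{*k} * e_{k-1})(t) be the resolvent-kernel series, where e_j(t) = (tʲ/j!)e^{-λt}. Then for all t ∈ [0,T], ∫₀ᵗ H(t-τ) e^{-λτ} dτ = ∫₀ᵗ J(t,s) e^{-λs} ds, where J(t,s) = -Σ_{k=1}^∞ L^{*k}(t-s) sᵏ/k!. In particular the left-hand side equals an integral against a kernel J that does not depend on λ. -/

import Mathlib

open MeasureTheory

/-- Convolution on `[0,t]`: `(f*g)(t) = ∫₀ᵗ f(t-s) g(s) ds`. -/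
noncomputable def conv (f g : ℝ → ℝ) : ℝ → ℝ :=
  fun t => ∫ s in (0:ℝ)..t, f (t - s) * g s

/-- Iterated convolution powers: `convPow f n = f^{*(n+1)}`. -/
noncomputable def convPow (f : ℝ → ℝ) : ℕ → ℝ → ℝ
  | 0 => f
  | n + 1 => conv f (convPow f n)

/-- `e_j(t) = (tʲ/j!) e^{-λ t}`. -/
noncomputable def ek (lam : ℝ) (j : ℕ) : ℝ → ℝ :=
  fun t => t ^ j / (Nat.factorial j : ℝ) * Real.exp (-lam * t)


open Set

lemma conv_continuous {f g : ℝ → ℝ} (hf : Continuous f) (hg : Continuous g) :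
    Continuous (conv f g) := by
  have h : Continuous (Function.uncurry fun (u s : ℝ) => f (u - s) * g s) := by
    apply Continuous.mul
    · exact hf.comp (continuous_fst.sub continuous_snd)
    · exact hg.comp continuous_snd
  exact intervalIntegral.continuous_parametric_intervalIntegral_of_continuous h continuous_id

lemma ek_continuous (lam : ℝ) (n : ℕ) : Continuous (ek lam n) := by
  unfold ek; fun_prop

lemma convPow_continuous {L : ℝ → ℝ} (hL : Continuous L) : ∀ n, Continuous (convPow L n)
  | 0 => hL
  | n + 1 => conv_continuous hL (convPow_continuous hL n)

lemma triangle_swap {t : ℝ} (ht : 0 ≤ t) {g : ℝ → ℝ → ℝ} (hg : Continuous (Function.uncurry g)) :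
    (∫ τ in (0:ℝ)..t, ∫ σ in τ..t, g τ σ) = ∫ σ in (0:ℝ)..t, ∫ τ in (0:ℝ)..σ, g τ σ := by
  set G := Function.uncurry g with hG
  set S : Set (ℝ × ℝ) := {p | p.1 < p.2} with hS
  have hSm : MeasurableSet S := measurableSet_lt measurable_fst measurable_snd
  set h : ℝ × ℝ → ℝ := S.indicator G with hh
  have hGint : IntegrableOn G (Ioc (0:ℝ) t ×ˢ Ioc (0:ℝ) t) :=
    (hg.continuousOn.integrableOn_compact (isCompact_Icc.prod isCompact_Icc)).mono_set
      (Set.prod_mono Ioc_subset_Icc_self Ioc_subset_Icc_self)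
  have hint : Integrable h ((volume.restrict (Ioc (0:ℝ) t)).prod (volume.restrict (Ioc (0:ℝ) t))) := by
    rw [Measure.prod_restrict]
    refine (hGint.norm).mono' ((hg.stronglyMeasurable.indicator hSm).aestronglyMeasurable) ?_
    filter_upwards with p
    simpa using norm_indicator_le_norm_self G p
  have swap := MeasureTheory.integral_integral_swap (f := fun τ σ => h (τ, σ)) hint
  calc (∫ τ in (0:ℝ)..t, ∫ σ in τ..t, g τ σ)
      = ∫ τ in Ioc (0:ℝ) t, ∫ σ in Ioc (0:ℝ) t, h (τ, σ) := by
        rw [intervalIntegral.integral_of_le ht]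
        refine setIntegral_congr_fun measurableSet_Ioc (fun τ hτ => ?_)
        rw [intervalIntegral.integral_of_le hτ.2]
        have : ∫ σ in Ioc (0:ℝ) t, h (τ, σ) = ∫ σ in Ioc (0:ℝ) t, (Ioc τ t).indicator (g τ) σ := by
          refine setIntegral_congr_fun measurableSet_Ioc (fun σ hσ => ?_)
          by_cases hc : τ < σ
          · simp [hh, hS, Set.indicator_of_mem, hc, Set.mem_Ioc, hσ.2, hG, Function.uncurry]
          · simp [hh, hS, hc, Set.indicator_of_notMem, Set.mem_Ioc]
        rw [this, setIntegral_indicator measurableSet_Ioc,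
          Set.inter_eq_self_of_subset_right (Ioc_subset_Ioc_left hτ.1.le)]
    _ = ∫ σ in Ioc (0:ℝ) t, ∫ τ in Ioc (0:ℝ) t, h (τ, σ) := swap
    _ = ∫ σ in (0:ℝ)..t, ∫ τ in (0:ℝ)..σ, g τ σ := by
        rw [intervalIntegral.integral_of_le ht]
        refine setIntegral_congr_fun measurableSet_Ioc (fun σ hσ => ?_)
        have h1 : ∫ τ in Ioc (0:ℝ) t, h (τ, σ) = ∫ τ in Ioc (0:ℝ) t, (Iio σ).indicator (fun τ => g τ σ) τ := by
          refine setIntegral_congr_fun measurableSet_Ioc (fun τ _ => ?_)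
          by_cases hc : τ < σ
          · simp [hh, hS, Set.indicator_of_mem, hc, hG, Function.uncurry]
          · simp [hh, hS, hc, Set.indicator_of_notMem]
        have h2 : Ioc (0:ℝ) t ∩ Iio σ = Ioo 0 σ := by
          ext x
          simp only [Set.mem_inter_iff, Set.mem_Ioc, Set.mem_Iio, Set.mem_Ioo]
          constructor
          · rintro ⟨⟨h3, _⟩, h5⟩; exact ⟨h3, h5⟩
          · rintro ⟨h3, h4⟩; exact ⟨⟨h3, le_trans h4.le hσ.2⟩, h4⟩
        rw [h1, setIntegral_indicator measurableSet_Iio, h2,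
          intervalIntegral.integral_of_le hσ.1.le, integral_Ioc_eq_integral_Ioo]

lemma termwise {F : ℝ → ℝ} (hF : Continuous F) (lam t : ℝ) (n : ℕ) (ht : 0 ≤ t) :
    (∫ τ in (0:ℝ)..t, conv F (ek lam n) (t - τ) * Real.exp (-lam * τ))
      = ∫ s in (0:ℝ)..t, F (t - s) * s ^ (n+1) / (Nat.factorial (n+1) : ℝ) * Real.exp (-lam * s) := by
  have step1 : ∀ τ : ℝ, conv F (ek lam n) (t - τ)
      = ∫ σ in τ..t, F (t - σ) * ek lam n (σ - τ) := by
    intro τ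
    have h := intervalIntegral.integral_comp_add_right (a := (0:ℝ)) (b := t - τ)
      (fun σ => F (t - σ) * ek lam n (σ - τ)) τ
    simp only [zero_add, sub_add_cancel] at h
    rw [conv, ← h]
    refine intervalIntegral.integral_congr (fun s _ => ?_)
    simp only [add_sub_cancel_right]
    ring_nf
  calc (∫ τ in (0:ℝ)..t, conv F (ek lam n) (t - τ) * Real.exp (-lam * τ))
      = ∫ τ in (0:ℝ)..t, ∫ σ in τ..t,
          F (t - σ) * ((σ - τ) ^ n / (Nat.factorial n : ℝ)) * Real.exp (-lam * σ) := by
        refine intervalIntegral.integral_congr (fun τ _ => ?_)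
        rw [step1 τ, ← intervalIntegral.integral_mul_const]
        refine intervalIntegral.integral_congr (fun σ _ => ?_)
        simp only [ek]
        rw [show -lam * σ = -lam * τ + -lam * (σ - τ) by ring, Real.exp_add]
        ring
    _ = ∫ σ in (0:ℝ)..t, ∫ τ in (0:ℝ)..σ,
          F (t - σ) * ((σ - τ) ^ n / (Nat.factorial n : ℝ)) * Real.exp (-lam * σ) := by
        refine triangle_swap ht ?_
        have : Continuous fun p : ℝ × ℝ => F (t - p.2) * ((p.2 - p.1) ^ n / (Nat.factorial n : ℝ)) * Real.exp (-lam * p.2) := by fun_prop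
        exact this
    _ = ∫ s in (0:ℝ)..t, F (t - s) * s ^ (n+1) / (Nat.factorial (n+1) : ℝ) * Real.exp (-lam * s) := by
        refine intervalIntegral.integral_congr (fun σ _ => ?_)
        have hinner : (∫ τ in (0:ℝ)..σ, F (t - σ) * ((σ - τ) ^ n / (Nat.factorial n : ℝ)) * Real.exp (-lam * σ))
            = (F (t - σ) / (Nat.factorial n : ℝ) * Real.exp (-lam * σ)) * ∫ τ in (0:ℝ)..σ, (σ - τ) ^ n := by
          rw [← intervalIntegral.integral_const_mul]
          refine intervalIntegral.integral_congr (fun τ _ => ?_)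
          ring
        have hpow : (∫ τ in (0:ℝ)..σ, (σ - τ) ^ n) = σ ^ (n+1) / (n+1 : ℝ) := by
          rw [intervalIntegral.integral_comp_sub_left (fun x => x ^ n) σ]
          simp [integral_pow]
        rw [hinner, hpow, Nat.factorial_succ]
        push_cast
        field_simp

lemma convPow_bound {L : ℝ → ℝ} {M : ℝ} (hM : 0 ≤ M) (hL : Continuous L)
    (hbd : ∀ x, |L x| ≤ M) :
    ∀ n, ∀ u, 0 ≤ u → |convPow L n u| ≤ M ^ (n+1) * u ^ n / (Nat.factorial n : ℝ) := by
  intro n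
  induction n with
  | zero => intro u hu; simpa [convPow] using hbd u
  | succ n ih =>
    intro u hu
    have hcont : Continuous (fun s => |L (u - s) * convPow L n s|) :=
      ((hL.comp (continuous_const.sub continuous_id)).mul (convPow_continuous hL n)).abs
    have hgcont : Continuous (fun s : ℝ => M * (M ^ (n+1) * s ^ n / (Nat.factorial n : ℝ))) := by
      fun_prop
    have h1 : |convPow L (n+1) u| ≤ ∫ s in (0:ℝ)..u, |L (u - s) * convPow L n s| := by
      exact intervalIntegral.abs_integral_le_integral_abs hu
    have h2 : (∫ s in (0:ℝ)..u, |L (u - s) * convPow L n s|)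
        ≤ ∫ s in (0:ℝ)..u, M * (M ^ (n+1) * s ^ n / (Nat.factorial n : ℝ)) := by
      refine intervalIntegral.integral_mono_on hu (hcont.intervalIntegrable _ _)
        (hgcont.intervalIntegrable _ _) (fun s hs => ?_)
      rw [abs_mul]
      have hP : |convPow L n s| ≤ M ^ (n+1) * s ^ n / (Nat.factorial n : ℝ) := ih s hs.1
      exact mul_le_mul (hbd _) hP (abs_nonneg _)
        hM
    have h3 : (∫ s in (0:ℝ)..u, M * (M ^ (n+1) * s ^ n / (Nat.factorial n : ℝ)))
        = M ^ (n+2) * u ^ (n+1) / (Nat.factorial (n+1) : ℝ) := by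
      have : (fun s : ℝ => M * (M ^ (n+1) * s ^ n / (Nat.factorial n : ℝ)))
          = fun s : ℝ => (M ^ (n+2) / (Nat.factorial n : ℝ)) * s ^ n := by
        funext s; ring
      rw [this, intervalIntegral.integral_const_mul, integral_pow, Nat.factorial_succ,
        zero_pow (Nat.succ_ne_zero n), sub_zero]
      have h4 : ((n:ℝ)+1) ≠ 0 := by positivity
      have h5 : ((Nat.factorial n : ℝ)) ≠ 0 := by exact_mod_cast Nat.factorial_ne_zero n
      push_cast
      rw [div_mul_div_comm]
      congr 1
      ring
    calc |convPow L (n+1) u| ≤ _ := h1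
      _ ≤ _ := h2
      _ = _ := h3
  -- done

lemma exp_le_one_of_nonneg {lam s : ℝ} (hlam : 0 ≤ lam) (hs : 0 ≤ s) :
    Real.exp (-lam * s) ≤ 1 := by
  rw [Real.exp_le_one_iff]
  nlinarith

lemma conv_ek_bound {L : ℝ → ℝ} {M lam : ℝ} (hM : 0 ≤ M) (hlam : 0 ≤ lam) (hL : Continuous L)
    (hbd : ∀ x, |L x| ≤ M) (n : ℕ) {t u : ℝ} (hu : u ∈ Icc 0 t) :
    |conv (convPow L n) (ek lam n) u| ≤ M ^ (n+1) * t ^ (2*n+1) / (Nat.factorial n : ℝ) := by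
  have ht0 : (0:ℝ) ≤ t := le_trans hu.1 hu.2
  have hfac : (1:ℝ) ≤ (Nat.factorial n : ℝ) := by exact_mod_cast Nat.one_le_iff_ne_zero.mpr (Nat.factorial_ne_zero n)
  have hfac0 : (0:ℝ) < (Nat.factorial n : ℝ) := by positivity
  set C : ℝ := M ^ (n+1) * t ^ n / (Nat.factorial n : ℝ) * t ^ n with hC
  have key : ∀ s ∈ Set.uIoc (0:ℝ) u, ‖convPow L n (u - s) * ek lam n s‖ ≤ C := by
    intro s hs
    rw [Set.uIoc_of_le hu.1] at hs
    have hs0 : 0 ≤ s := hs.1.le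
    have hsu : s ≤ u := hs.2
    have h1 : |convPow L n (u - s)| ≤ M ^ (n+1) * t ^ n / (Nat.factorial n : ℝ) := by
      refine le_trans (convPow_bound hM hL hbd n (u - s) (by linarith)) ?_
      gcongr M ^ (n+1) * ?_ / (Nat.factorial n : ℝ)
      exact pow_le_pow_left₀ (by linarith) (by linarith [hu.2]) n
    have h2 : |ek lam n s| ≤ t ^ n := by
      rw [ek, abs_mul, abs_of_nonneg (by positivity : (0:ℝ) ≤ s ^ n / (Nat.factorial n : ℝ)),
        abs_of_nonneg (Real.exp_nonneg _)]
      calc s ^ n / (Nat.factorial n : ℝ) * Real.exp (-lam * s)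
          ≤ s ^ n / (Nat.factorial n : ℝ) * 1 := by
            gcongr
            exact exp_le_one_of_nonneg hlam hs0
          
        _ = s ^ n / (Nat.factorial n : ℝ) := mul_one _
        _ ≤ s ^ n := by
            rw [div_le_iff₀ hfac0]; nlinarith [pow_nonneg hs0 n]
        _ ≤ t ^ n := by gcongr; linarith [hu.2]
    rw [Real.norm_eq_abs, abs_mul]
    exact mul_le_mul h1 h2 (abs_nonneg _) (by positivity)
  have := intervalIntegral.norm_integral_le_of_norm_le_const key
  rw [Real.norm_eq_abs] at this
  refine le_trans this ?_
  have habs : |u - 0| = u := by rw [sub_zero, abs_of_nonneg hu.1]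
  rw [habs]
  have hCu : C * u ≤ C * t := by
    have hC0 : 0 ≤ C := by positivity
    exact mul_le_mul_of_nonneg_left hu.2 hC0
  refine le_trans hCu (le_of_eq ?_)
  rw [hC]
  rw [show 2*n+1 = n + n + 1 by ring]
  field_simp
  ring

theorem main' (lam M t : ℝ) (hlam : 0 < lam) (hM : 0 ≤ M) (L : ℝ → ℝ)
    (hL : Continuous L) (hbd : ∀ x, |L x| ≤ M) (ht : 0 ≤ t) :
    (∫ τ in (0:ℝ)..t,
        (-(∑' n : ℕ, conv (convPow L n) (ek lam n) (t - τ))) * Real.exp (-lam * τ))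
      = ∫ s in (0:ℝ)..t,
          (-(∑' n : ℕ, convPow L n (t - s) * s ^ (n + 1) / (Nat.factorial (n + 1) : ℝ)))
            * Real.exp (-lam * s) := by
  set c : ℕ → ℝ := fun n => M ^ (n+1) * t ^ (2*n+1) / (Nat.factorial n : ℝ) with hc_def
  have hc0 : ∀ n, 0 ≤ c n := fun n => by positivity
  have hc : Summable c := by
    have h := (Real.summable_pow_div_factorial (M * t^2)).mul_left (M * t)
    refine h.congr (fun n => ?_)
    rw [hc_def]
    simp only [mul_pow, ← pow_mul]
    ring
  have hct : Summable (fun n => t * c n) := hc.mul_left t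
  set F : ℕ → ℝ → ℝ :=
    fun n τ => -(conv (convPow L n) (ek lam n) (t - τ) * Real.exp (-lam * τ)) with hF_def
  set G : ℕ → ℝ → ℝ :=
    fun n s => -(convPow L n (t - s) * s ^ (n + 1) / (Nat.factorial (n + 1) : ℝ)
      * Real.exp (-lam * s)) with hG_def
  have hFc : ∀ n, Continuous (F n) := by
    intro n
    apply Continuous.neg
    exact ((conv_continuous (convPow_continuous hL n) (ek_continuous lam n)).comp
      (continuous_const.sub continuous_id)).mul (by fun_prop)
  have hGc : ∀ n, Continuous (G n) := by
    intro n
    apply Continuous.neg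
    exact (((convPow_continuous hL n).comp (continuous_const.sub continuous_id)).mul
      (by fun_prop)).div_const _ |>.mul (by fun_prop)
  have hFbd : ∀ n, ∀ τ ∈ Ioc (0:ℝ) t, ‖F n τ‖ ≤ c n := by
    intro n τ hτ
    have h1 : t - τ ∈ Icc (0:ℝ) t := ⟨by linarith [hτ.2], by linarith [hτ.1]⟩
    rw [hF_def, Real.norm_eq_abs, abs_neg, abs_mul, abs_of_nonneg (Real.exp_nonneg _)]
    calc |conv (convPow L n) (ek lam n) (t - τ)| * Real.exp (-lam * τ)
        ≤ c n * 1 := by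
          refine mul_le_mul (conv_ek_bound hM hlam.le hL hbd n h1)
            (exp_le_one_of_nonneg hlam.le hτ.1.le) (Real.exp_nonneg _) (hc0 n)
      _ = c n := mul_one _
  have hGbd : ∀ n, ∀ s ∈ Ioc (0:ℝ) t, ‖G n s‖ ≤ c n := by
    intro n s hs
    have h1 : (0:ℝ) ≤ t - s := by linarith [hs.2]
    have hfac1 : (1:ℝ) ≤ (Nat.factorial (n+1) : ℝ) := by
      exact_mod_cast Nat.one_le_iff_ne_zero.mpr (Nat.factorial_ne_zero (n+1))
    rw [hG_def, Real.norm_eq_abs, abs_neg, abs_mul, abs_of_nonneg (Real.exp_nonneg _)]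
    have h2 : |convPow L n (t - s) * s ^ (n + 1) / (Nat.factorial (n+1) : ℝ)| ≤ c n := by
      rw [abs_div, abs_mul, abs_of_nonneg (by positivity : (0:ℝ) ≤ (Nat.factorial (n+1) : ℝ)),
        abs_of_nonneg (pow_nonneg hs.1.le (n+1))]
      have h3 : |convPow L n (t - s)| ≤ M ^ (n+1) * t ^ n / (Nat.factorial n : ℝ) := by
        refine le_trans (convPow_bound hM hL hbd n (t - s) h1) ?_
        gcongr M ^ (n+1) * ?_ / (Nat.factorial n : ℝ)
        exact pow_le_pow_left₀ h1 (by linarith [hs.1]) n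
      have h4 : s ^ (n+1) ≤ t ^ (n+1) := pow_le_pow_left₀ hs.1.le hs.2 (n+1)
      calc |convPow L n (t - s)| * s ^ (n+1) / (Nat.factorial (n+1) : ℝ)
          ≤ |convPow L n (t - s)| * s ^ (n+1) := by
            refine div_le_self (mul_nonneg (abs_nonneg _) (pow_nonneg hs.1.le _)) hfac1
        _ ≤ (M ^ (n+1) * t ^ n / (Nat.factorial n : ℝ)) * t ^ (n+1) :=
            mul_le_mul h3 h4 (pow_nonneg hs.1.le _) (by positivity)
        _ = c n := by
            simp only [hc_def]
            rw [show 2*n+1 = n + (n+1) by ring, pow_add]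
            ring
    calc |convPow L n (t - s) * s ^ (n + 1) / (Nat.factorial (n+1) : ℝ)| * Real.exp (-lam * s)
        ≤ c n * 1 := mul_le_mul h2 (exp_le_one_of_nonneg hlam.le hs.1.le)
          (Real.exp_nonneg _) (hc0 n)
      _ = c n := mul_one _
  -- generic step: swap integral and tsum
  have swap : ∀ (H : ℕ → ℝ → ℝ), (∀ n, Continuous (H n)) →
      (∀ n, ∀ τ ∈ Ioc (0:ℝ) t, ‖H n τ‖ ≤ c n) →
      (∫ τ in Ioc (0:ℝ) t, ∑' n, H n τ) = ∑' n, ∫ τ in Ioc (0:ℝ) t, H n τ := by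
    intro H hHc hHbd
    have hint : ∀ n, IntegrableOn (H n) (Ioc (0:ℝ) t) := fun n =>
      (hHc n).integrableOn_Ioc
    refine (integral_tsum_of_summable_integral_norm hint ?_).symm
    refine Summable.of_nonneg_of_le (fun n => integral_nonneg (fun τ => norm_nonneg _))
      (fun n => ?_) hct
    calc (∫ τ in Ioc (0:ℝ) t, ‖H n τ‖)
        ≤ ∫ _τ in Ioc (0:ℝ) t, c n := by
          refine setIntegral_mono_on (hint n).norm
            (integrableOn_const measure_Ioc_lt_top.ne) measurableSet_Ioc
            (fun τ hτ => hHbd n τ hτ)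
      _ = t * c n := by
          rw [setIntegral_const, Real.volume_real_Ioc_of_le ht, smul_eq_mul, sub_zero]
  have expand : ∀ (a : ℕ → ℝ) (e : ℝ), (-(∑' n, a n)) * e = ∑' n, -(a n * e) := by
    intro a e
    rw [neg_mul, ← tsum_mul_right, ← tsum_neg]
  calc (∫ τ in (0:ℝ)..t,
        (-(∑' n : ℕ, conv (convPow L n) (ek lam n) (t - τ))) * Real.exp (-lam * τ))
      = ∫ τ in Ioc (0:ℝ) t, ∑' n, F n τ := by
        rw [intervalIntegral.integral_of_le ht]
        refine setIntegral_congr_fun measurableSet_Ioc (fun τ _ => ?_)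
        exact expand _ _
    _ = ∑' n, ∫ τ in Ioc (0:ℝ) t, F n τ := swap F hFc hFbd
    _ = ∑' n, ∫ s in Ioc (0:ℝ) t, G n s := by
        refine tsum_congr (fun n => ?_)
        rw [← intervalIntegral.integral_of_le ht, ← intervalIntegral.integral_of_le ht,
          hF_def, hG_def]
        simp only [intervalIntegral.integral_neg]
        rw [termwise (convPow_continuous hL n) lam t n ht]
    _ = ∫ s in Ioc (0:ℝ) t, ∑' n, G n s := (swap G hGc hGbd).symm
    _ = _ := by
        rw [intervalIntegral.integral_of_le ht]
        refine setIntegral_congr_fun measurableSet_Ioc (fun s _ => ?_)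
        exact (expand _ _).symm

/-- For the resolvent-kernel series `H(t) = -Σ_{k≥1} (L^{*k} * e_{k-1})(t)` one has
`∫₀ᵗ H(t-τ) e^{-λτ} dτ = ∫₀ᵗ J(t,s) e^{-λs} ds` with
`J(t,s) = -Σ_{k≥1} L^{*k}(t-s) sᵏ/k!`, a kernel which does not depend on `λ`. -/
theorem H_integral_eq_J_integral (T lam M : ℝ) (hT : 0 < T) (hlam : 0 < lam)
    (hM : 0 ≤ M) (L : ℝ → ℝ)
    (hL : ContinuousOn L (Set.Icc 0 T))
    (hbd : ∀ t ∈ Set.Icc (0:ℝ) T, |L t| ≤ M) :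
    ∀ t ∈ Set.Icc (0:ℝ) T,
      (∫ τ in (0:ℝ)..t,
          (-(∑' n : ℕ, conv (convPow L n) (ek lam n) (t - τ))) * Real.exp (-lam * τ))
        = ∫ s in (0:ℝ)..t,
            (-(∑' n : ℕ, convPow L n (t - s) * s ^ (n + 1) / (Nat.factorial (n + 1) : ℝ)))
              * Real.exp (-lam * s) := by
  intro t ht
  have ht0 : (0:ℝ) ≤ t := ht.1
  set L' : ℝ → ℝ := fun x => L (min (max x 0) T) with hL'_def
  have hmem : ∀ x : ℝ, min (max x 0) T ∈ Set.Icc (0:ℝ) T := fun x =>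
    ⟨le_min (le_max_right x 0) hT.le, min_le_right _ _⟩
  have hL'c : Continuous L' := hL.comp_continuous (by fun_prop) hmem
  have hbd' : ∀ x, |L' x| ≤ M := fun x => hbd _ (hmem x)
  have hagree : ∀ x ∈ Set.Icc (0:ℝ) T, L' x = L x := by
    intro x hx
    simp only [hL'_def]
    rw [max_eq_left hx.1, min_eq_left hx.2]
  have hPow : ∀ n, ∀ u ∈ Set.Icc (0:ℝ) T, convPow L n u = convPow L' n u := by
    intro n
    induction n with
    | zero => intro u hu; exact (hagree u hu).symm
    | succ n ih =>
      intro u hu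
      show conv L (convPow L n) u = conv L' (convPow L' n) u
      unfold conv
      refine intervalIntegral.integral_congr (fun s hsm => ?_)
      rw [Set.uIcc_of_le hu.1] at hsm
      have h1 : u - s ∈ Set.Icc (0:ℝ) T := ⟨by linarith [hsm.2], by linarith [hsm.1, hu.2]⟩
      have h2 : s ∈ Set.Icc (0:ℝ) T := ⟨hsm.1, le_trans hsm.2 hu.2⟩
      rw [← hagree _ h1, ih s h2]
  have hConv : ∀ n, ∀ u ∈ Set.Icc (0:ℝ) T,
      conv (convPow L n) (ek lam n) u = conv (convPow L' n) (ek lam n) u := by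
    intro n u hu
    unfold conv
    refine intervalIntegral.integral_congr (fun s hsm => ?_)
    rw [Set.uIcc_of_le hu.1] at hsm
    have h1 : u - s ∈ Set.Icc (0:ℝ) T := ⟨by linarith [hsm.2], by linarith [hsm.1, hu.2]⟩
    rw [hPow n _ h1]
  calc (∫ τ in (0:ℝ)..t,
        (-(∑' n : ℕ, conv (convPow L n) (ek lam n) (t - τ))) * Real.exp (-lam * τ))
      = ∫ τ in (0:ℝ)..t,
          (-(∑' n : ℕ, conv (convPow L' n) (ek lam n) (t - τ))) * Real.exp (-lam * τ) := by
        refine intervalIntegral.integral_congr (fun τ hτm => ?_)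
        rw [Set.uIcc_of_le ht0] at hτm
        have h1 : t - τ ∈ Set.Icc (0:ℝ) T := ⟨by linarith [hτm.2], by linarith [hτm.1, ht.2]⟩
        congr 2
        exact tsum_congr (fun n => hConv n _ h1)
    _ = ∫ s in (0:ℝ)..t,
          (-(∑' n : ℕ, convPow L' n (t - s) * s ^ (n + 1) / (Nat.factorial (n + 1) : ℝ)))
            * Real.exp (-lam * s) := main' lam M t hlam hM L' hL'c hbd' ht0
    _ = _ := by
        refine intervalIntegral.integral_congr (fun s hsm => ?_)
        rw [Set.uIcc_of_le ht0] at hsm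
        have h1 : t - s ∈ Set.Icc (0:ℝ) T := ⟨by linarith [hsm.2], by linarith [hsm.1, ht.2]⟩
        congr 2
        exact tsum_congr (fun n => by rw [hPow n _ h1])
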